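/- Let A be a skew-symmetric payoff matrix on Fin N whose pure strategies are partitioned into a nonempty set Π_eq and its complement Π_out, and suppose there is r > 0 such that A i ρ ≥ r for every i ∈ Π_eq and ρ ∈ Π_out, while |A i j| < r for all i, j ∈ Π_eq. Assume nondegeneracy: for every nonempty E ⊆ Π_eq, the zero-sum matrix game in which the row player mixes over E and the column player mixes over Π_eq (row payoff given by A) has a unique pair of optimal mixed strategies. If P ⊆ Fin N is a population such that E = P ∩ Π_eq is nonempty and a proper subset of Π_eq, and PE(P) > 0, then there exists a missing support strategy π* ∈ Π_eq \ E with PE(P ∪ {π*}) < PE(P). -/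

import Mathlib

/-- Payoff of pure strategy `i` against mixed strategy `σ`: `(Aσ) i = ∑ j, A i j * σ j`. -/
noncomputable def pay {N : ℕ} (A : Fin N → Fin N → ℝ) (σ : Fin N → ℝ) (i : Fin N) : ℝ :=
  ∑ j, A i j * σ j

/-- `max_i (Aσ) i`. -/
noncomputable def maxPay {N : ℕ} (A : Fin N → Fin N → ℝ) (σ : Fin N → ℝ) : ℝ :=
  ⨆ i, pay A σ i

/-- `σ` is a mixed strategy supported inside `P`. -/
def SuppIn {N : ℕ} (P : Set (Fin N)) (σ : Fin N → ℝ) : Prop :=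
  σ ∈ stdSimplex ℝ (Fin N) ∧ ∀ j ∉ P, σ j = 0

/-- Population exploitability of a population `P`:
the least value of `max_i (Aσ) i` over mixed strategies supported in `P`. -/
noncomputable def PE {N : ℕ} (A : Fin N → Fin N → ℝ) (P : Set (Fin N)) : ℝ :=
  sInf (maxPay A '' {σ | SuppIn P σ})

/-- `i` is a best response to `σ`. -/
def IsBR {N : ℕ} (A : Fin N → Fin N → ℝ) (σ : Fin N → ℝ) (i : Fin N) : Prop :=
  pay A σ i = maxPay A σ

/-- Guaranteed payoff of a row mixture `x` against the column strategy set `C`: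
`min_{j ∈ C} ∑ i, x i * A i j`. -/
noncomputable def rowGuarantee {N : ℕ} (A : Fin N → Fin N → ℝ) (C : Set (Fin N))
    (x : Fin N → ℝ) : ℝ :=
  sInf {v | ∃ j ∈ C, v = ∑ i, x i * A i j}

/-- Threat value of a column mixture `y` against the row strategy set `R`:
`max_{i ∈ R} ∑ j, A i j * y j`. -/
noncomputable def colThreat {N : ℕ} (A : Fin N → Fin N → ℝ) (R : Set (Fin N))
    (y : Fin N → ℝ) : ℝ :=
  sSup {v | ∃ i ∈ R, v = ∑ j, A i j * y j}

/-- `(x, y)` is an optimal pair of the zero-sum matrix game with row strategy set `R`,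
column strategy set `C` and row payoff `A`: `x` is a maximin row mixture and `y` a
minimax column mixture. -/
def OptimalPair {N : ℕ} (A : Fin N → Fin N → ℝ) (R C : Set (Fin N))
    (x y : Fin N → ℝ) : Prop :=
  SuppIn R x ∧ SuppIn C y ∧
  (∀ x', SuppIn R x' → rowGuarantee A C x' ≤ rowGuarantee A C x) ∧
  (∀ y', SuppIn C y' → colThreat A R y ≤ colThreat A R y')

section aux
variable {N : ℕ} {A : Fin N → Fin N → ℝ} {R C : Set (Fin N)} {x y σ : Fin N → ℝ}

lemma rgSet_eq (A : Fin N → Fin N → ℝ) (C : Set (Fin N)) (x : Fin N → ℝ) :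
    {v | ∃ j ∈ C, v = ∑ i, x i * A i j} = (fun j => ∑ i, x i * A i j) '' C := by
  ext v; constructor
  · rintro ⟨j, hj, rfl⟩; exact ⟨j, hj, rfl⟩
  · rintro ⟨j, hj, rfl⟩; exact ⟨j, hj, rfl⟩

lemma ctSet_eq (A : Fin N → Fin N → ℝ) (R : Set (Fin N)) (y : Fin N → ℝ) :
    {v | ∃ i ∈ R, v = ∑ j, A i j * y j} = (fun i => ∑ j, A i j * y j) '' R := by
  ext v; constructor
  · rintro ⟨j, hj, rfl⟩; exact ⟨j, hj, rfl⟩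
  · rintro ⟨j, hj, rfl⟩; exact ⟨j, hj, rfl⟩

lemma rowGuarantee_le {j : Fin N} (hj : j ∈ C) :
    rowGuarantee A C x ≤ ∑ i, x i * A i j := by
  apply csInf_le
  · rw [rgSet_eq]; exact ((Set.toFinite C).image _).bddBelow
  · exact ⟨j, hj, rfl⟩

lemma le_rowGuarantee (hC : C.Nonempty) {b : ℝ} (h : ∀ j ∈ C, b ≤ ∑ i, x i * A i j) :
    b ≤ rowGuarantee A C x := by
  apply le_csInf
  · rw [rgSet_eq]; exact hC.image _
  · rintro v ⟨j, hj, rfl⟩; exact h j hj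

lemma le_colThreat {i : Fin N} (hi : i ∈ R) :
    ∑ j, A i j * y j ≤ colThreat A R y := by
  apply le_csSup
  · rw [ctSet_eq]; exact ((Set.toFinite R).image _).bddAbove
  · exact ⟨i, hi, rfl⟩

lemma colThreat_le (hR : R.Nonempty) {b : ℝ} (h : ∀ i ∈ R, ∑ j, A i j * y j ≤ b) :
    colThreat A R y ≤ b := by
  apply csSup_le
  · rw [ctSet_eq]; exact hR.image _
  · rintro v ⟨i, hi, rfl⟩; exact h i hi

lemma exists_colThreat (hR : R.Nonempty) :
    ∃ i ∈ R, colThreat A R y = ∑ j, A i j * y j := by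
  have h1 : colThreat A R y ∈ {v | ∃ i ∈ R, v = ∑ j, A i j * y j} := by
    apply Set.Nonempty.csSup_mem
    · exact ⟨_, ⟨hR.choose, hR.choose_spec, rfl⟩⟩
    · rw [ctSet_eq]; exact (Set.toFinite R).image _
  exact h1

lemma colThreat_mono (hR : R.Nonempty) {R' : Set (Fin N)} (hRR : R ⊆ R') :
    colThreat A R y ≤ colThreat A R' y := by
  apply colThreat_le hR
  intro i hi; exact le_colThreat (hRR hi)

lemma pay_le_maxPay (i : Fin N) : pay A σ i ≤ maxPay A σ :=
  le_ciSup ((Set.finite_range _).bddAbove) i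

lemma maxPay_le [Nonempty (Fin N)] {b : ℝ} (h : ∀ i, pay A σ i ≤ b) : maxPay A σ ≤ b :=
  ciSup_le h

lemma exists_maxPay [Nonempty (Fin N)] : ∃ i, maxPay A σ = pay A σ i := by
  have h1 : maxPay A σ ∈ Set.range (pay A σ) :=
    Set.Nonempty.csSup_mem (Set.range_nonempty _) (Set.finite_range _)
  obtain ⟨i, hi⟩ := h1
  exact ⟨i, hi.symm⟩

lemma simplex_nonneg (hσ : σ ∈ stdSimplex ℝ (Fin N)) (i : Fin N) : 0 ≤ σ i := hσ.1 i

lemma simplex_sum (hσ : σ ∈ stdSimplex ℝ (Fin N)) : ∑ i, σ i = 1 := hσ.2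

lemma exists_pos_weight (hσ : σ ∈ stdSimplex ℝ (Fin N)) : ∃ j, 0 < σ j := by
  by_contra h
  push_neg at h
  have : ∀ j ∈ Finset.univ, σ j = 0 := fun j _ => le_antisymm (h j) (hσ.1 j)
  have := Finset.sum_eq_zero this
  rw [hσ.2] at this
  norm_num at this

lemma suppIn_mono {P P' : Set (Fin N)} (h : P ⊆ P') (hσ : SuppIn P σ) : SuppIn P' σ :=
  ⟨hσ.1, fun j hj => hσ.2 j (fun hjP => hj (h hjP))⟩

end aux

section structural
variable {N : ℕ} {A : Fin N → Fin N → ℝ} {Peq : Set (Fin N)} {r : ℝ}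
variable {E : Set (Fin N)} {σ : Fin N → ℝ}

-- payoff of an in-strategy against a Peq-supported mixture is in (-r, r)
lemma pay_gt_of_mem (hin : ∀ i ∈ Peq, ∀ j ∈ Peq, |A i j| < r)
    (hσ : SuppIn E σ) (hEP : E ⊆ Peq) {i : Fin N} (hi : i ∈ Peq) :
    -r < pay A σ i := by
  obtain ⟨j₀, hj₀⟩ := exists_pos_weight hσ.1
  have hj₀E : j₀ ∈ E := by
    by_contra h; rw [hσ.2 j₀ h] at hj₀; exact lt_irrefl _ hj₀
  have key : ∑ j, (-r) * σ j < ∑ j, A i j * σ j := by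
    apply Finset.sum_lt_sum
    · intro j _
      rcases eq_or_lt_of_le (hσ.1.1 j) with h0 | h0
      · rw [← h0]; simp
      · have hjE : j ∈ E := by
          by_contra h; rw [hσ.2 j h] at h0; exact lt_irrefl _ h0
        have := hin i hi j (hEP hjE)
        have : -r ≤ A i j := le_of_lt (neg_lt_of_abs_lt this)
        exact mul_le_mul_of_nonneg_right this (le_of_lt h0)
    · refine ⟨j₀, Finset.mem_univ _, ?_⟩
      have := hin i hi j₀ (hEP hj₀E)
      exact mul_lt_mul_of_pos_right (neg_lt_of_abs_lt this) hj₀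
  calc -r = ∑ j, (-r) * σ j := by rw [← Finset.mul_sum, hσ.1.2, mul_one]
    _ < pay A σ i := key

lemma pay_lt_of_mem (hin : ∀ i ∈ Peq, ∀ j ∈ Peq, |A i j| < r)
    (hσ : SuppIn E σ) (hEP : E ⊆ Peq) {i : Fin N} (hi : i ∈ Peq) :
    pay A σ i < r := by
  obtain ⟨j₀, hj₀⟩ := exists_pos_weight hσ.1
  have hj₀E : j₀ ∈ E := by
    by_contra h; rw [hσ.2 j₀ h] at hj₀; exact lt_irrefl _ hj₀
  have key : ∑ j, A i j * σ j < ∑ j, r * σ j := by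
    apply Finset.sum_lt_sum
    · intro j _
      rcases eq_or_lt_of_le (hσ.1.1 j) with h0 | h0
      · rw [← h0]; simp
      · have hjE : j ∈ E := by
          by_contra h; rw [hσ.2 j h] at h0; exact lt_irrefl _ h0
        have := hin i hi j (hEP hjE)
        exact mul_le_mul_of_nonneg_right (le_of_lt (lt_of_abs_lt this)) (le_of_lt h0)
    · refine ⟨j₀, Finset.mem_univ _, ?_⟩
      have := hin i hi j₀ (hEP hj₀E)
      exact mul_lt_mul_of_pos_right (lt_of_abs_lt this) hj₀
  calc pay A σ i < ∑ j, r * σ j := key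
    _ = r := by rw [← Finset.mul_sum, hσ.1.2, mul_one]

lemma pay_le_of_not_mem (hA : ∀ i j, A j i = -A i j)
    (hout : ∀ i ∈ Peq, ∀ ρ ∉ Peq, r ≤ A i ρ)
    (hσ : SuppIn E σ) (hEP : E ⊆ Peq) {i : Fin N} (hi : i ∉ Peq) :
    pay A σ i ≤ -r := by
  have key : ∑ j, A i j * σ j ≤ ∑ j, (-r) * σ j := by
    apply Finset.sum_le_sum
    intro j _
    rcases eq_or_lt_of_le (hσ.1.1 j) with h0 | h0
    · rw [← h0]; simp
    · have hjE : j ∈ E := by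
        by_contra h; rw [hσ.2 j h] at h0; exact lt_irrefl _ h0
      have h1 : r ≤ A j i := hout j (hEP hjE) i hi
      have h2 : A i j ≤ -r := by
        have := hA i j  -- A j i = -A i j
        nlinarith
      exact mul_le_mul_of_nonneg_right h2 (le_of_lt h0)
  calc pay A σ i ≤ ∑ j, (-r) * σ j := key
    _ = -r := by rw [← Finset.mul_sum, hσ.1.2, mul_one]

lemma maxPay_eq_colThreat [Nonempty (Fin N)] (hA : ∀ i j, A j i = -A i j)
    (hout : ∀ i ∈ Peq, ∀ ρ ∉ Peq, r ≤ A i ρ)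
    (hin : ∀ i ∈ Peq, ∀ j ∈ Peq, |A i j| < r)
    (hσ : SuppIn E σ) (hEne : E.Nonempty) (hEP : E ⊆ Peq) :
    maxPay A σ = colThreat A Peq σ := by
  obtain ⟨e, heE⟩ := hEne
  have hePeq : e ∈ Peq := hEP heE
  apply le_antisymm
  · apply maxPay_le
    intro i
    by_cases hi : i ∈ Peq
    · exact le_colThreat hi
    · calc pay A σ i ≤ -r := pay_le_of_not_mem hA hout hσ hEP hi
        _ ≤ pay A σ e := le_of_lt (pay_gt_of_mem hin hσ hEP hePeq)
        _ ≤ colThreat A Peq σ := le_colThreat hePeq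
  · apply colThreat_le ⟨e, hePeq⟩
    intro i _; exact pay_le_maxPay i

lemma maxPay_lt_r [Nonempty (Fin N)] (hA : ∀ i j, A j i = -A i j) (hr : 0 < r)
    (hout : ∀ i ∈ Peq, ∀ ρ ∉ Peq, r ≤ A i ρ)
    (hin : ∀ i ∈ Peq, ∀ j ∈ Peq, |A i j| < r)
    (hσ : SuppIn E σ) (hEP : E ⊆ Peq) :
    maxPay A σ < r := by
  obtain ⟨i, hi⟩ := exists_maxPay (A := A) (σ := σ)
  rw [hi]
  by_cases h : i ∈ Peq
  · exact pay_lt_of_mem hin hσ hEP h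
  · calc pay A σ i ≤ -r := pay_le_of_not_mem hA hout hσ hEP h
      _ < r := by linarith

-- skew-symmetry: row guarantee against Peq is minus the col threat
lemma rowGuarantee_eq_neg_colThreat (hA : ∀ i j, A j i = -A i j)
    (hPeq : Peq.Nonempty) (σ : Fin N → ℝ) :
    rowGuarantee A Peq σ = -(colThreat A Peq σ) := by
  have hflip : ∀ j : Fin N, ∑ i, σ i * A i j = -(∑ k, A j k * σ k) := by
    intro j
    rw [← Finset.sum_neg_distrib]
    apply Finset.sum_congr rfl
    intro i _
    rw [hA j i]
    ring
  apply le_antisymm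
  · obtain ⟨i, hi, hival⟩ := exists_colThreat (A := A) (R := Peq) (y := σ) hPeq
    calc rowGuarantee A Peq σ ≤ ∑ k, σ k * A k i := rowGuarantee_le hi
      _ = -(∑ k, A i k * σ k) := hflip i
      _ = -(colThreat A Peq σ) := by rw [← hival]
  · apply le_rowGuarantee hPeq
    intro j hj
    rw [hflip j]
    exact neg_le_neg (le_colThreat hj)

end structural

section duality
variable {N : ℕ}

/-- Weak duality. -/
lemma weak_duality (A : Fin N → Fin N → ℝ) {R C : Set (Fin N)} {x y : Fin N → ℝ}
    (hR : R.Nonempty) (hC : C.Nonempty) (hx : SuppIn R x) (hy : SuppIn C y) :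
    rowGuarantee A C x ≤ colThreat A R y := by
  have step1 : rowGuarantee A C x ≤ ∑ j, y j * (∑ i, x i * A i j) := by
    have : ∑ j, y j * rowGuarantee A C x ≤ ∑ j, y j * (∑ i, x i * A i j) := by
      apply Finset.sum_le_sum
      intro j _
      by_cases hj : j ∈ C
      · exact mul_le_mul_of_nonneg_left (rowGuarantee_le hj) (hy.1.1 j)
      · rw [hy.2 j hj]; simp
    calc rowGuarantee A C x = ∑ j, y j * rowGuarantee A C x := by
          rw [← Finset.sum_mul, hy.1.2, one_mul]
      _ ≤ _ := this
  have step2 : ∑ j, y j * (∑ i, x i * A i j) = ∑ i, x i * (∑ j, A i j * y j) := by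
    simp_rw [Finset.mul_sum]
    rw [Finset.sum_comm]
    apply Finset.sum_congr rfl; intro i _
    apply Finset.sum_congr rfl; intro j _
    ring
  have step3 : ∑ i, x i * (∑ j, A i j * y j) ≤ colThreat A R y := by
    have : ∑ i, x i * (∑ j, A i j * y j) ≤ ∑ i, x i * colThreat A R y := by
      apply Finset.sum_le_sum
      intro i _
      by_cases hi : i ∈ R
      · exact mul_le_mul_of_nonneg_left (le_colThreat hi) (hx.1.1 i)
      · rw [hx.2 i hi]; simp
    calc ∑ i, x i * (∑ j, A i j * y j) ≤ ∑ i, x i * colThreat A R y := this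
      _ = colThreat A R y := by rw [← Finset.sum_mul, hx.1.2, one_mul]
  linarith

/-- Theorem of the alternative for matrix games, via separation. -/
lemma matrix_alternative (B : Fin N → Fin N → ℝ) (R C : Set (Fin N))
    (hR : R.Nonempty) (hC : C.Nonempty) :
    (∃ y, SuppIn C y ∧ ∀ i ∈ R, ∑ j, B i j * y j ≤ 0) ∨
    (∃ x, SuppIn R x ∧ ∃ δ > 0, ∀ j ∈ C, δ ≤ ∑ i, x i * B i j) := by
  classical
  -- the linear map y ↦ (Ay restricted to R)
  let L : (Fin N → ℝ) →ₗ[ℝ] (Fin N → ℝ) :=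
    { toFun := fun y i => if i ∈ R then ∑ j, B i j * y j else 0
      map_add' := by
        intro y z; funext i
        by_cases h : i ∈ R <;> simp [h, mul_add, Finset.sum_add_distrib]
      map_smul' := by
        intro c y; funext i
        by_cases h : i ∈ R <;> simp [h, Finset.mul_sum]
        · apply Finset.sum_congr rfl; intro j _; ring }
  let Δ : Set (Fin N → ℝ) := {y | SuppIn C y}
  let K : Set (Fin N → ℝ) := L '' Δ
  let D : Set (Fin N → ℝ) := {z | ∀ i, z i ≤ 0}
  by_cases hdisj : Disjoint K D
  · -- separation
    right
    have hΔconv : Convex ℝ Δ := by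
      have : Δ = stdSimplex ℝ (Fin N) ∩ ⋂ (j : Fin N), ⋂ (_ : j ∉ C), {y | y j = 0} := by
        ext y
        simp only [Set.mem_inter_iff, Set.mem_iInter, Set.mem_setOf_eq]
        rfl
      rw [this]
      apply (convex_stdSimplex ℝ (Fin N)).inter
      apply convex_iInter; intro j; apply convex_iInter; intro _
      have : {y : Fin N → ℝ | y j = 0} = {y | y j ≤ 0} ∩ {y | 0 ≤ y j} := by
        ext y; simp only [Set.mem_setOf_eq, Set.mem_inter_iff]; constructor
        · intro h; exact ⟨le_of_eq h, ge_of_eq h⟩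
        · intro h; exact le_antisymm h.1 h.2
      rw [this]
      exact Convex.inter (convex_halfSpace_le (LinearMap.isLinear (LinearMap.proj j)) 0)
        (convex_halfSpace_ge (LinearMap.isLinear (LinearMap.proj j)) 0)
    have hΔcomp : IsCompact Δ := by
      have hclosed : IsClosed Δ := by
        have : Δ = stdSimplex ℝ (Fin N) ∩ ⋂ (j : Fin N), ⋂ (_ : j ∉ C), {y | y j = 0} := by
          ext y
          simp only [Set.mem_inter_iff, Set.mem_iInter, Set.mem_setOf_eq]
          rfl
        rw [this]
        apply (isClosed_stdSimplex ℝ (Fin N)).inter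
        apply isClosed_iInter; intro j; apply isClosed_iInter; intro _
        exact isClosed_eq (continuous_apply j) continuous_const
      exact (isCompact_stdSimplex ℝ (Fin N)).of_isClosed_subset hclosed (fun y hy => hy.1)
    have hLcont : Continuous L := by
      apply continuous_pi
      intro i
      by_cases h : i ∈ R
      · simp only [L, LinearMap.coe_mk, AddHom.coe_mk, h, if_true]
        exact continuous_finset_sum _ (fun j _ => (continuous_const.mul (continuous_apply j)))
      · simp only [L, LinearMap.coe_mk, AddHom.coe_mk, h, if_false]
        exact continuous_const
    have hKconv : Convex ℝ K := hΔconv.linear_image L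
    have hKcomp : IsCompact K := hΔcomp.image hLcont
    have hDconv : Convex ℝ D := by
      intro z1 h1 z2 h2 a b ha hb hab
      intro i
      simp only [Pi.add_apply, Pi.smul_apply, smul_eq_mul]
      have := h1 i; have := h2 i
      nlinarith
    have hDclosed : IsClosed D := by
      have : D = ⋂ (i : Fin N), {z : Fin N → ℝ | z i ≤ 0} := by
        ext z; simp only [Set.mem_iInter, Set.mem_setOf_eq]; rfl
      rw [this]
      exact isClosed_iInter (fun i => isClosed_le (continuous_apply i) continuous_const)
    obtain ⟨f, u, v, hfK, huv, hfD⟩ :=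
      geometric_hahn_banach_compact_closed hKconv hKcomp hDconv hDclosed hdisj
    -- basic facts
    have hv0 : v < 0 := by
      have := hfD 0 (fun i => le_refl 0)
      simpa using this
    -- f(e_i) ≤ 0 for all i
    have hei : ∀ i : Fin N, f (fun k => if i = k then (1:ℝ) else 0) ≤ 0 := by
      intro i
      by_contra h
      push_neg at h
      set ei : Fin N → ℝ := fun k => if i = k then (1:ℝ) else 0
      have hb : ((v - 1) / f ei) • ei ∈ D := by
        intro k
        simp only [Pi.smul_apply, smul_eq_mul, ei]
        by_cases hk : i = k
        · rw [if_pos hk, mul_one]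
          apply div_nonpos_of_nonpos_of_nonneg <;> linarith
        · rw [if_neg hk, mul_zero]
      have := hfD _ hb
      rw [map_smul, smul_eq_mul, div_mul_cancel₀ _ (ne_of_gt h)] at this
      linarith
    -- representation of f on columns
    set w : Fin N → ℝ := fun i => if i ∈ R then -(f (fun k => if i = k then (1:ℝ) else 0)) else 0
      with hw
    have hwnn : ∀ i, 0 ≤ w i := by
      intro i
      by_cases h : i ∈ R
      · simp only [hw, h, if_true]; linarith [hei i]
      · simp [hw, h]
    -- each column is in K
    have hcol : ∀ j ∈ C, (fun i => if i ∈ R then B i j else 0) ∈ K := by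
      intro j hj
      refine ⟨fun k => if k = j then (1:ℝ) else 0, ?_, ?_⟩
      · constructor
        · constructor
          · intro k; by_cases h : k = j <;> simp [h]
          · simp
        · intro k hk
          have : k ≠ j := fun h => hk (h ▸ hj)
          simp [this]
      · funext i
        by_cases h : i ∈ R <;>
          simp only [L, LinearMap.coe_mk, AddHom.coe_mk, h, if_true, if_false]
        simp [mul_ite, mul_one, mul_zero]
    -- representation of f via the standard basis
    have hfrep : ∀ z : Fin N → ℝ, f z = ∑ i, z i * f (fun k => if i = k then (1:ℝ) else 0) := by
      intro z
      conv_lhs => rw [pi_eq_sum_univ z]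
      rw [map_sum]
      apply Finset.sum_congr rfl
      intro i _
      rw [map_smul]
      simp
    have hcolval : ∀ j ∈ C, ∑ i, w i * B i j = -(f (fun i => if i ∈ R then B i j else 0)) := by
      intro j hj
      rw [hfrep (fun i => if i ∈ R then B i j else 0), ← Finset.sum_neg_distrib]
      apply Finset.sum_congr rfl
      intro i _
      by_cases h : i ∈ R <;> simp only [hw, h, if_true, if_false] <;> ring
    have hcolpos : ∀ j ∈ C, -u ≤ ∑ i, w i * B i j := by
      intro j hj
      have := hfK _ (hcol j hj)
      rw [hcolval j hj]
      linarith
    set S : ℝ := ∑ i, w i with hS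
    have hSnn : 0 ≤ S := Finset.sum_nonneg (fun i _ => hwnn i)
    have hSpos : 0 < S := by
      rcases lt_or_eq_of_le hSnn with h | h
      · exact h
      · exfalso
        have hall : ∀ i ∈ Finset.univ, w i = 0 := by
          intro i _
          have := (Finset.sum_eq_zero_iff_of_nonneg (fun i _ => hwnn i)).mp h.symm
          exact this i (Finset.mem_univ i)
        obtain ⟨j, hj⟩ := hC
        have h0 : ∑ i, w i * B i j = 0 :=
          Finset.sum_eq_zero (fun i hi => by rw [hall i hi, zero_mul])
        have := hcolpos j hj
        rw [h0] at this
        linarith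
    refine ⟨fun i => w i / S, ⟨⟨fun i => div_nonneg (hwnn i) hSnn, ?_⟩, ?_⟩, -u / S,
      div_pos (by linarith) hSpos, ?_⟩
    · rw [← Finset.sum_div, ← hS, div_self (ne_of_gt hSpos)]
    · intro i hi
      have h0 : w i = 0 := by simp [hw, hi]
      show w i / S = 0
      rw [h0, zero_div]
    · intro j hj
      have heq : ∑ i, w i / S * B i j = (∑ i, w i * B i j) / S := by
        rw [Finset.sum_div]
        apply Finset.sum_congr rfl
        intro i _; ring
      rw [heq]
      exact (div_le_div_iff_of_pos_right hSpos).mpr (hcolpos j hj)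
  · -- not disjoint: column player can secure ≤ 0
    left
    rw [Set.not_disjoint_iff] at hdisj
    obtain ⟨z, ⟨y, hy, rfl⟩, hzD⟩ := hdisj
    refine ⟨y, hy, ?_⟩
    intro i hi
    have := hzD i
    simpa only [L, LinearMap.coe_mk, AddHom.coe_mk, hi, if_true] using this

end duality

section strong
variable {N : ℕ}

/-- Strong duality at an optimal pair. -/
lemma strong_duality (A : Fin N → Fin N → ℝ) {R C : Set (Fin N)} {x y : Fin N → ℝ}
    (hR : R.Nonempty) (hC : C.Nonempty) (hopt : OptimalPair A R C x y) :
    rowGuarantee A C x = colThreat A R y := by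
  obtain ⟨hx, hy, hxopt, hyopt⟩ := hopt
  apply le_antisymm (weak_duality A hR hC hx hy)
  by_contra hlt
  push_neg at hlt
  set t : ℝ := (rowGuarantee A C x + colThreat A R y) / 2 with ht
  have ht1 : rowGuarantee A C x < t := by rw [ht]; linarith
  have ht2 : t < colThreat A R y := by rw [ht]; linarith
  rcases matrix_alternative (fun i j => A i j - t) R C hR hC with ⟨y', hy', hle⟩ | ⟨x', hx', δ, hδ, hge⟩
  · -- column can hold threat ≤ t, contradicting minimality of y's threat
    have hth : colThreat A R y' ≤ t := by
      apply colThreat_le hR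
      intro i hi
      have := hle i hi
      have hsum : ∑ j, (A i j - t) * y' j = (∑ j, A i j * y' j) - t := by
        have h1 : ∀ j : Fin N, (A i j - t) * y' j = A i j * y' j - t * y' j := fun j => by ring
        rw [Finset.sum_congr rfl (fun j _ => h1 j), Finset.sum_sub_distrib,
          ← Finset.mul_sum, hy'.1.2, mul_one]
      have := le_colThreat (A := A) (R := R) (y := y') hi
      linarith
    have := hyopt y' hy'
    linarith
  · have hrg : t + δ ≤ rowGuarantee A C x' := by
      apply le_rowGuarantee hC
      intro j hj
      have := hge j hj
      have hsum : ∑ i, x' i * (A i j - t) = (∑ i, x' i * A i j) - t := by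
        have h1 : ∀ i : Fin N, x' i * (A i j - t) = x' i * A i j - t * x' i := fun i => by ring
        rw [Finset.sum_congr rfl (fun i _ => h1 i), Finset.sum_sub_distrib,
          ← Finset.mul_sum, hx'.1.2, mul_one]
      linarith [hsum ▸ this]
    have := hxopt x' hx'
    linarith

end strong

section restrictsec
variable {N : ℕ} {A : Fin N → Fin N → ℝ} {Peq : Set (Fin N)} {r : ℝ}

/-- Any `P`-supported mixture is weakly dominated (in max-payoff) by an `(P ∩ Peq)`-supported
mixture. -/
lemma restrict_to_eq [Nonempty (Fin N)] (hA : ∀ i j, A j i = -A i j) (hr : 0 < r)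
    (hout : ∀ i ∈ Peq, ∀ ρ ∉ Peq, r ≤ A i ρ)
    (hin : ∀ i ∈ Peq, ∀ j ∈ Peq, |A i j| < r)
    {P : Set (Fin N)} (hE : (P ∩ Peq).Nonempty) {σ : Fin N → ℝ} (hσ : SuppIn P σ) :
    ∃ σ', SuppIn (P ∩ Peq) σ' ∧ maxPay A σ' ≤ maxPay A σ := by
  classical
  set E : Set (Fin N) := P ∩ Peq with hEdef
  obtain ⟨e, heE⟩ := hE
  set s : ℝ := ∑ j, (if j ∈ E then σ j else 0) with hs
  have hsnn : 0 ≤ s := Finset.sum_nonneg (fun j _ => by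
    by_cases h : j ∈ E <;> simp [h, hσ.1.1 j])
  -- split of total mass
  have hsplit : ∀ i : Fin N,
      pay A σ i = (∑ j, (if j ∈ E then A i j * σ j else 0))
        + ∑ j, (if j ∈ E then 0 else A i j * σ j) := by
    intro i
    rw [← Finset.sum_add_distrib]
    apply Finset.sum_congr rfl
    intro j _
    by_cases h : j ∈ E <;> simp [h]
  have hmass : (∑ j, (if j ∈ E then (0:ℝ) else σ j)) = 1 - s := by
    have : (∑ j, (if j ∈ E then (0:ℝ) else σ j)) + s = 1 := by
      rw [hs, ← Finset.sum_add_distrib, ← hσ.1.2]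
      apply Finset.sum_congr rfl
      intro j _
      by_cases h : j ∈ E <;> simp [h]
    linarith
  -- out-of-Peq mass pays at least r against any member of Peq
  have hpay_out : ∀ i ∈ Peq, (∑ j, (if j ∈ E then (0:ℝ) else A i j * σ j))
      ≥ r * (1 - s) := by
    intro i hi
    rw [← hmass, Finset.mul_sum]
    apply Finset.sum_le_sum
    intro j _
    by_cases h : j ∈ E
    · simp [h]
    · simp only [h, if_false]
      rcases eq_or_lt_of_le (hσ.1.1 j) with h0 | h0
      · rw [← h0]; simp
      · have hjP : j ∈ P := by
          by_contra hc; rw [hσ.2 j hc] at h0; exact lt_irrefl _ h0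
        have hjout : j ∉ Peq := fun hc => h ⟨hjP, hc⟩
        exact mul_le_mul_of_nonneg_right (hout i hi j hjout) (le_of_lt h0)
  rcases eq_or_lt_of_le hsnn with hs0 | hspos
  · -- all mass outside Peq
    refine ⟨fun j => if j = e then 1 else 0, ⟨⟨?_, ?_⟩, ?_⟩, ?_⟩
    · intro j; by_cases h : j = e <;> simp [h]
    · simp
    · intro j hj
      have : j ≠ e := fun h => hj (h ▸ heE)
      simp [this]
    · have hσE0 : ∀ j ∈ E, σ j = 0 := by
        intro j hj
        by_contra hc
        have h0 : 0 < σ j := lt_of_le_of_ne (hσ.1.1 j) (Ne.symm hc)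
        have : 0 < s := by
          rw [hs]
          apply Finset.sum_pos' (fun k _ => by by_cases h : k ∈ E <;> simp [h, hσ.1.1 k])
          exact ⟨j, Finset.mem_univ j, by simp [hj, h0]⟩
        linarith
      -- payoff of strategy e against σ is at least r
      have hpay : r ≤ pay A σ e := by
        have h1 := hpay_out e heE.2
        have h2 : (∑ j, (if j ∈ E then A e j * σ j else 0)) = 0 := by
          apply Finset.sum_eq_zero
          intro j _
          by_cases h : j ∈ E
          · simp [h, hσE0 j h]
          · simp [h]
        rw [hsplit e, h2, zero_add]
        calc r = r * (1 - s) := by rw [← hs0]; ring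
          _ ≤ _ := hpay_out e heE.2
      have hlt : maxPay A (fun j => if j = e then 1 else 0) < r := by
        apply maxPay_lt_r hA hr hout hin (E := E)
        · refine ⟨⟨?_, ?_⟩, ?_⟩
          · intro j; by_cases h : j = e <;> simp [h]
          · simp
          · intro j hj
            have : j ≠ e := fun h => hj (h ▸ heE)
            simp [this]
        · exact Set.inter_subset_right
      refine le_of_lt ?_
      calc maxPay A (fun j => if j = e then 1 else 0) < r := hlt
        _ ≤ pay A σ e := hpay
        _ ≤ maxPay A σ := pay_le_maxPay e
  · -- positive mass inside E : renormalize
    set σ' : Fin N → ℝ := fun j => (if j ∈ E then σ j else 0) / s with hσ'def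
    have hσ'supp : SuppIn E σ' := by
      refine ⟨⟨?_, ?_⟩, ?_⟩
      · intro j
        apply div_nonneg _ hsnn
        by_cases h : j ∈ E <;> simp [h, hσ.1.1 j]
      · rw [← Finset.sum_div, ← hs, div_self (ne_of_gt hspos)]
      · intro j hj; simp [hσ'def, hj]
    refine ⟨σ', hσ'supp, ?_⟩
    obtain ⟨i, hieq⟩ := exists_maxPay (A := A) (σ := σ')
    have hiPeq : i ∈ Peq := by
      by_contra hc
      have h1 : pay A σ' i ≤ -r := pay_le_of_not_mem hA hout hσ'supp Set.inter_subset_right hc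
      have h2 : -r < pay A σ' e :=
        pay_gt_of_mem hin hσ'supp Set.inter_subset_right heE.2
      have := pay_le_maxPay (A := A) (σ := σ') e
      rw [hieq] at this
      linarith
    have hmr : maxPay A σ' < r := maxPay_lt_r hA hr hout hin hσ'supp Set.inter_subset_right
    -- pay A σ i ≥ s * pay A σ' i + r * (1-s)
    have hkey : s * pay A σ' i + r * (1 - s) ≤ pay A σ i := by
      have hfirst : (∑ j, (if j ∈ E then A i j * σ j else 0)) = s * pay A σ' i := by
        simp only [pay]
        rw [Finset.mul_sum]
        apply Finset.sum_congr rfl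
        intro j _
        by_cases h : j ∈ E
        · simp only [h, if_true, hσ'def]
          field_simp
        · simp [h, hσ'def]
      rw [hsplit i, hfirst]
      have := hpay_out i hiPeq
      linarith
    have hs1 : s ≤ 1 := by
      have h2 : (∑ j, (if j ∈ E then (0:ℝ) else σ j)) ≥ 0 :=
        Finset.sum_nonneg (fun j _ => by by_cases h : j ∈ E <;> simp [h, hσ.1.1 j])
      linarith [hmass]
    calc maxPay A σ' = pay A σ' i := hieq
      _ ≤ s * pay A σ' i + (1 - s) * pay A σ' i := by nlinarith [hieq ▸ hmr]
      _ ≤ pay A σ i := by nlinarith [hieq ▸ hmr]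
      _ ≤ maxPay A σ := pay_le_maxPay i

end restrictsec

section final
variable {N : ℕ} {A : Fin N → Fin N → ℝ} {Peq : Set (Fin N)} {r : ℝ}

lemma maxPay_eq_neg_rowGuarantee [Nonempty (Fin N)] (hA : ∀ i j, A j i = -A i j)
    (hout : ∀ i ∈ Peq, ∀ ρ ∉ Peq, r ≤ A i ρ)
    (hin : ∀ i ∈ Peq, ∀ j ∈ Peq, |A i j| < r)
    {E : Set (Fin N)} {σ : Fin N → ℝ}
    (hσ : SuppIn E σ) (hEne : E.Nonempty) (hEP : E ⊆ Peq) :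
    maxPay A σ = -(rowGuarantee A Peq σ) := by
  rw [maxPay_eq_colThreat hA hout hin hσ hEne hEP,
    rowGuarantee_eq_neg_colThreat hA (hEne.mono hEP) σ, neg_neg]

lemma PE_eq_value [Nonempty (Fin N)] (hA : ∀ i j, A j i = -A i j) (hr : 0 < r)
    (hout : ∀ i ∈ Peq, ∀ ρ ∉ Peq, r ≤ A i ρ)
    (hin : ∀ i ∈ Peq, ∀ j ∈ Peq, |A i j| < r)
    {P : Set (Fin N)} (hE : (P ∩ Peq).Nonempty) {x y : Fin N → ℝ}
    (hxy : OptimalPair A (P ∩ Peq) Peq x y) :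
    PE A P = -(rowGuarantee A Peq x) := by
  have hlow : ∀ s ∈ maxPay A '' {σ | SuppIn P σ}, -(rowGuarantee A Peq x) ≤ s := by
    rintro s ⟨σ, hσ, rfl⟩
    obtain ⟨σ', hσ'supp, hσ'le⟩ := restrict_to_eq hA hr hout hin hE hσ
    have h1 : maxPay A σ' = -(rowGuarantee A Peq σ') :=
      maxPay_eq_neg_rowGuarantee hA hout hin hσ'supp hE Set.inter_subset_right
    have h2 : rowGuarantee A Peq σ' ≤ rowGuarantee A Peq x := hxy.2.2.1 σ' hσ'supp
    linarith
  apply le_antisymm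
  · apply csInf_le ⟨_, hlow⟩
    refine ⟨x, suppIn_mono Set.inter_subset_left hxy.1, ?_⟩
    exact maxPay_eq_neg_rowGuarantee hA hout hin hxy.1 hE Set.inter_subset_right
  · apply le_csInf
    · exact ⟨_, x, suppIn_mono Set.inter_subset_left hxy.1, rfl⟩
    · exact hlow

lemma skew_zero (hA : ∀ i j, A j i = -A i j) (y : Fin N → ℝ) :
    ∑ i, y i * pay A y i = 0 := by
  have h : (∑ i, y i * pay A y i) = -∑ i, y i * pay A y i := by
    simp only [pay, Finset.mul_sum]
    conv_lhs => rw [Finset.sum_comm]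
    rw [← Finset.sum_neg_distrib]
    apply Finset.sum_congr rfl
    intro a _
    rw [← Finset.sum_neg_distrib]
    apply Finset.sum_congr rfl
    intro b _
    rw [hA a b]
    ring
  linarith

end final

/-- under the `Π_eq`/`Π_out` structure with margin `r` and
nondegeneracy, if `E = P ∩ Π_eq` is nonempty and a proper subset of `Π_eq` and
`PE(P) > 0`, then some missing support strategy `π* ∈ Π_eq \ E` strictly decreases
PE when added. -/
theorem stmt6 {N : ℕ} (A : Fin N → Fin N → ℝ) (hA : ∀ i j, A j i = -A i j)
    (Peq : Set (Fin N)) (hne : Peq.Nonempty) (r : ℝ) (hr : 0 < r)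
    (hout : ∀ i ∈ Peq, ∀ ρ ∉ Peq, r ≤ A i ρ)
    (hin : ∀ i ∈ Peq, ∀ j ∈ Peq, |A i j| < r)
    (hnd : ∀ E : Set (Fin N), E.Nonempty → E ⊆ Peq →
      ∃! p : (Fin N → ℝ) × (Fin N → ℝ), OptimalPair A E Peq p.1 p.2)
    (P : Set (Fin N)) (hE : (P ∩ Peq).Nonempty) (hEss : P ∩ Peq ⊂ Peq)
    (hPE : 0 < PE A P) :
    ∃ πstar ∈ Peq \ (P ∩ Peq), PE A (P ∪ {πstar}) < PE A P := by
  have : Nonempty (Fin N) := ⟨hne.choose⟩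
  set E : Set (Fin N) := P ∩ Peq with hEdef
  have hEsub : E ⊆ Peq := hEss.subset
  obtain ⟨p, hp, hpuniq⟩ := hnd E hE hEsub
  have hPEeq : PE A P = -(rowGuarantee A Peq p.1) :=
    PE_eq_value hA hr hout hin hE hp
  set vE : ℝ := rowGuarantee A Peq p.1 with hvEdef
  have hvE : vE < 0 := by rw [hPEeq] at hPE; linarith
  have sd : vE = colThreat A E p.2 := strong_duality A hE hne hp
  by_contra hcon
  push_neg at hcon
  -- every πstar in Peq \ E fails to strictly improve
  have key : ∀ i ∈ Peq, pay A p.2 i ≤ vE := by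
    intro i hi
    by_cases hiE : i ∈ E
    · have := le_colThreat (A := A) (R := E) (y := p.2) hiE
      rw [← sd] at this
      exact this
    · -- i ∈ Peq \ E
      have hiD : i ∈ Peq \ E := ⟨hi, hiE⟩
      have hset : (P ∪ {i}) ∩ Peq = insert i E := by
        ext j
        simp only [Set.mem_inter_iff, Set.mem_union, Set.mem_singleton_iff,
          Set.mem_insert_iff, hEdef]
        constructor
        · rintro ⟨hj1 | hj2, hj3⟩
          · exact Or.inr ⟨hj1, hj3⟩
          · exact Or.inl hj2
        · rintro (rfl | ⟨hj1, hj2⟩)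
          · exact ⟨Or.inr rfl, hi⟩
          · exact ⟨Or.inl hj1, hj2⟩
      have hins_ne : (insert i E).Nonempty := ⟨i, Set.mem_insert i E⟩
      have hins_sub : insert i E ⊆ Peq := Set.insert_subset hi hEsub
      obtain ⟨q, hq, hquniq⟩ := hnd (insert i E) hins_ne hins_sub
      have hq' : OptimalPair A ((P ∪ {i}) ∩ Peq) Peq q.1 q.2 := by
        rw [hset]; exact hq
      have hE' : ((P ∪ {i}) ∩ Peq).Nonempty := by
        rw [hset]; exact hins_ne
      have hPE'eq : PE A (P ∪ {i}) = -(rowGuarantee A Peq q.1) :=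
        PE_eq_value hA hr hout hin hE' hq'
      have h1 : rowGuarantee A Peq q.1 ≤ vE := by
        have := hcon i hiD
        rw [hPEeq, hPE'eq] at this
        linarith
      have h2 : vE ≤ rowGuarantee A Peq q.1 :=
        hq.2.2.1 p.1 (suppIn_mono (Set.subset_insert i E) hp.1)
      have heq : rowGuarantee A Peq q.1 = vE := le_antisymm h1 h2
      have sd' : rowGuarantee A Peq q.1 = colThreat A (insert i E) q.2 :=
        strong_duality A hins_ne hne hq
      -- q.2 is also a minimax strategy for the game (E, Peq)
      have y'opt : ∀ y'', SuppIn Peq y'' → colThreat A E q.2 ≤ colThreat A E y'' := by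
        intro y'' hy''
        calc colThreat A E q.2 ≤ colThreat A (insert i E) q.2 :=
              colThreat_mono hE (Set.subset_insert i E)
          _ = vE := by rw [← sd', heq]
          _ = colThreat A E p.2 := sd
          _ ≤ colThreat A E y'' := hp.2.2.2 y'' hy''
      have newopt : OptimalPair A E Peq p.1 q.2 := ⟨hp.1, hq.2.1, hp.2.2.1, y'opt⟩
      have hpair : (p.1, q.2) = p := hpuniq (p.1, q.2) newopt
      have hyeq : q.2 = p.2 := by
        have := congrArg (fun z : (Fin N → ℝ) × (Fin N → ℝ) => z.2) hpair
        simpa using this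
      have hfin : pay A p.2 i ≤ colThreat A (insert i E) q.2 := by
        rw [hyeq]
        exact le_colThreat (Set.mem_insert i E)
      rw [← sd', heq] at hfin
      exact hfin
  -- contradiction via skew-symmetry
  have hS0 : ∑ i, p.2 i * pay A p.2 i = 0 := skew_zero hA p.2
  have hSle : ∑ i, p.2 i * pay A p.2 i ≤ vE := by
    have hsupp : SuppIn Peq p.2 := hp.2.1
    calc ∑ i, p.2 i * pay A p.2 i ≤ ∑ i, p.2 i * vE := by
          apply Finset.sum_le_sum
          intro i _
          by_cases hi : i ∈ Peq
          · exact mul_le_mul_of_nonneg_left (key i hi) (hsupp.1.1 i)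
          · rw [hsupp.2 i hi]; simp
      _ = vE := by rw [← Finset.sum_mul, hsupp.1.2, one_mul]
  linarith
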